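/- Let G be a connected r-regular graph with n vertices whose signless Laplacian spectrum is {2r, (r+1) with multiplicity a, (r-1) with multiplicity b} for some nonnegative integers a, b. Then a = 0, b = r = n - 1, and G is isomorphic to the complete graph K_{r+1}. -/

import Mathlib

open Finset Matrix BigOperators

/-- The signless Laplacian matrix `Q(G) = D(G) + A(G)` of a simple graph, over `ℝ`. -/
noncomputable def signlessLaplacian {V : Type*} [Fintype V] [DecidableEq V]
    (G : SimpleGraph V) [DecidableRel G.Adj] : Matrix V V ℝ :=
  Matrix.diagonal (fun v => (G.degree v : ℝ)) + G.adjMatrix ℝ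

lemma signlessLaplacian_isHermitian {V : Type*} [Fintype V] [DecidableEq V]
    (G : SimpleGraph V) [DecidableRel G.Adj] : (signlessLaplacian G).IsHermitian := by
  unfold signlessLaplacian
  apply Matrix.IsHermitian.add
  · exact Matrix.isHermitian_diagonal _
  · rw [Matrix.IsHermitian, conjTranspose_eq_transpose_of_trivial]
    exact G.isSymm_adjMatrix

/-- The signless Laplacian eigenvalues of `G` (as a function on the vertex index type). -/
noncomputable def qEig {V : Type*} [Fintype V] [DecidableEq V]
    (G : SimpleGraph V) [DecidableRel G.Adj] : V → ℝ :=
  (signlessLaplacian_isHermitian G).eigenvalues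

/- ### Auxiliary lemmas -/

/-- The trace of a real Hermitian matrix is the sum of its eigenvalues. -/
lemma aux_trace_eq_sum_eigenvalues {n : ℕ} (A : Matrix (Fin n) (Fin n) ℝ)
    (hA : A.IsHermitian) : A.trace = ∑ i, hA.eigenvalues i := by
  conv_lhs => rw [hA.spectral_theorem, Unitary.conjStarAlgAut_apply]
  rw [Matrix.trace_mul_cycle, (Matrix.mem_unitaryGroup_iff').mp (hA.eigenvectorUnitary).2,
    one_mul]
  simp [Matrix.trace_diagonal]

/-- The trace of the square of a real Hermitian matrix is the sum of the squares of its
eigenvalues. -/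
lemma aux_trace_sq_eq_sum_eigenvalues_sq {n : ℕ} (A : Matrix (Fin n) (Fin n) ℝ)
    (hA : A.IsHermitian) : (A * A).trace = ∑ i, hA.eigenvalues i ^ 2 := by
  conv_lhs => rw [hA.spectral_theorem, Unitary.conjStarAlgAut_apply]
  rw [show ∀ U D W : Matrix (Fin n) (Fin n) ℝ, (U*D*W)*(U*D*W) = U*(D*(W*U)*D)*W by
      intros; simp only [mul_assoc],
    (Matrix.mem_unitaryGroup_iff').mp (hA.eigenvectorUnitary).2, mul_one,
    Matrix.trace_mul_cycle, ← mul_assoc,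
    (Matrix.mem_unitaryGroup_iff').mp (hA.eigenvectorUnitary).2, one_mul]
  simp [Matrix.diagonal_mul_diagonal, Matrix.trace_diagonal, sq]

lemma aux_trace_signlessLaplacian {n r : ℕ} (G : SimpleGraph (Fin n)) [DecidableRel G.Adj]
    (hreg : G.IsRegularOfDegree r) : (signlessLaplacian G).trace = n * r := by
  unfold signlessLaplacian
  rw [Matrix.trace_add, Matrix.trace_diagonal, SimpleGraph.trace_adjMatrix]
  simp [hreg _]

lemma aux_trace_signlessLaplacian_sq {n r : ℕ} (G : SimpleGraph (Fin n)) [DecidableRel G.Adj]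
    (hreg : G.IsRegularOfDegree r) :
    (signlessLaplacian G * signlessLaplacian G).trace = n * (r^2 + r) := by
  have hd : Matrix.diagonal (fun v : Fin n => (G.degree v : ℝ)) = (r : ℝ) • 1 := by
    ext i j
    by_cases h : i = j <;> simp [h, hreg _, Matrix.one_apply]
  unfold signlessLaplacian
  rw [hd]
  have htAA : (G.adjMatrix ℝ * G.adjMatrix ℝ).trace = (n * r : ℝ) := by
    rw [Matrix.trace]
    simp only [Matrix.diag, SimpleGraph.adjMatrix_mul_self_apply_self, hreg _]
    simp [mul_comm]
  rw [add_mul, mul_add, mul_add]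
  rw [Matrix.trace_add, Matrix.trace_add, Matrix.trace_add]
  simp [htAA, Matrix.trace_smul, SimpleGraph.trace_adjMatrix, Matrix.trace_one]
  ring

/-- A connected 1-regular graph has at most 2 vertices. -/
lemma aux_one_regular_card_le_two {n : ℕ} (G : SimpleGraph (Fin n)) [DecidableRel G.Adj]
    (hconn : G.Connected) (hreg : G.IsRegularOfDegree 1) : n ≤ 2 := by
  have hne : Nonempty (Fin n) := hconn.nonempty
  obtain ⟨v⟩ := hne
  have huniq : ∀ x y z : Fin n, G.Adj x y → G.Adj x z → y = z := by
    intro x y z hy hz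
    exact Finset.card_le_one.mp (le_of_eq (hreg x))
      y (G.mem_neighborFinset x y |>.mpr hy) z (G.mem_neighborFinset x z |>.mpr hz)
  obtain ⟨w, hw⟩ := Finset.card_eq_one.mp (hreg v)
  have hvw : G.Adj v w := by
    have : w ∈ G.neighborFinset v := by rw [hw]; exact Finset.mem_singleton_self w
    exact (G.mem_neighborFinset v w).mp this
  have key : ∀ x u : Fin n, G.Walk x u → (x = v ∨ x = w) → (u = v ∨ u = w) := by
    intro x u p
    induction p with
    | nil => exact fun h => h
    | @cons x y u hadj p ih =>
      intro hx
      apply ih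
      rcases hx with rfl | rfl
      · right; exact huniq x y w hadj hvw
      · left; exact huniq x y v hadj hvw.symm
  have hsub : (Finset.univ : Finset (Fin n)) ⊆ {v, w} := by
    intro u _
    rcases key v u (hconn.preconnected v u).some (Or.inl rfl) with rfl | rfl <;> simp
  calc n = (Finset.univ : Finset (Fin n)).card := by simp
    _ ≤ ({v, w} : Finset (Fin n)).card := Finset.card_le_card hsub
    _ ≤ 2 := Finset.card_insert_le _ _ |>.trans (by simp)

/-- An `r`-regular graph on `r+1` vertices is complete. -/
lemma aux_regular_complete {n r : ℕ} (G : SimpleGraph (Fin n)) [DecidableRel G.Adj]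
    (hreg : G.IsRegularOfDegree r) (hn : n = r + 1) :
    Nonempty (G ≃g SimpleGraph.completeGraph (Fin (r+1))) := by
  have hadj : ∀ u v : Fin n, u ≠ v → G.Adj u v := by
    intro u v huv
    have hsub : G.neighborFinset u ⊆ Finset.univ.erase u := by
      intro x hx
      rw [Finset.mem_erase]
      exact ⟨fun h => G.irrefl (h ▸ (G.mem_neighborFinset u x).mp hx), Finset.mem_univ x⟩
    have hcard : (Finset.univ.erase u).card ≤ (G.neighborFinset u).card := by
      rw [show (G.neighborFinset u).card = r from hreg u,
        Finset.card_erase_of_mem (Finset.mem_univ u)]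
      simp [hn]
    have heq := Finset.eq_of_subset_of_card_le hsub hcard
    have : v ∈ G.neighborFinset u := by
      rw [heq, Finset.mem_erase]; exact ⟨huv.symm, Finset.mem_univ v⟩
    exact (G.mem_neighborFinset u v).mp this
  refine ⟨⟨finCongr hn, ?_⟩⟩
  intro u v
  simp only [SimpleGraph.completeGraph, SimpleGraph.top_adj, ne_eq, EmbeddingLike.apply_eq_iff_eq]
  constructor
  · exact fun h => hadj u v h
  · exact fun h => G.ne_of_adj h

/-- A connected `r`-regular graph on `n` vertices with signless Laplacian spectrum
`{2r, (r+1)^a, (r-1)^b}` satisfies `a = 0`, `b = r = n - 1`, and is the complete graph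
`K_{r+1}`. -/
theorem regular_spectrum_complete_classification {n : ℕ}
    (G : SimpleGraph (Fin n)) [DecidableRel G.Adj] (r a b : ℕ)
    (hconn : G.Connected) (hreg : G.IsRegularOfDegree r)
    (hspec : Multiset.map (qEig G) Finset.univ.val
      = {2 * (r : ℝ)} + Multiset.replicate a ((r : ℝ) + 1)
        + Multiset.replicate b ((r : ℝ) - 1)) :
    a = 0 ∧ b = r ∧ r = n - 1 ∧ Nonempty (G ≃g SimpleGraph.completeGraph (Fin (r+1))) := by
  -- cardinality
  have hcard : n = 1 + a + b := by
    have := congrArg Multiset.card hspec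
    simp at this
    omega
  have h1 : (n : ℝ) = 1 + a + b := by exact_mod_cast hcard
  -- first trace identity
  have h2 : 2*(r:ℝ) + a*(r+1) + b*(r-1) = n * r := by
    have hs : (∑ i, qEig G i) = (Multiset.map (qEig G) Finset.univ.val).sum := rfl
    have ht := aux_trace_eq_sum_eigenvalues _ (signlessLaplacian_isHermitian G)
    rw [aux_trace_signlessLaplacian G hreg] at ht
    rw [show (∑ i, (signlessLaplacian_isHermitian G).eigenvalues i) = ∑ i, qEig G i from rfl,
      hs, hspec] at ht
    simp only [Multiset.sum_add, Multiset.sum_singleton, Multiset.sum_replicate,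
      nsmul_eq_mul] at ht
    linarith [ht]
  -- second trace identity
  have h3 : (2*(r:ℝ))^2 + a*(r+1)^2 + b*(r-1)^2 = n * (r^2 + r) := by
    have hs : (∑ i, qEig G i ^ 2)
        = (Multiset.map (fun x : ℝ => x ^ 2) (Multiset.map (qEig G) Finset.univ.val)).sum := by
      rw [Multiset.map_map]; rfl
    have ht := aux_trace_sq_eq_sum_eigenvalues_sq _ (signlessLaplacian_isHermitian G)
    rw [aux_trace_signlessLaplacian_sq G hreg] at ht
    rw [show (∑ i, (signlessLaplacian_isHermitian G).eigenvalues i ^ 2)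
        = ∑ i, qEig G i ^ 2 from rfl, hs, hspec] at ht
    simp only [Multiset.map_add, Multiset.map_singleton, Multiset.map_replicate,
      Multiset.sum_add, Multiset.sum_singleton, Multiset.sum_replicate, nsmul_eq_mul] at ht
    linarith [ht]
  -- arithmetic consequences
  have hb : (b:ℝ) = a + r := by linear_combination -h2 - (r:ℝ)*h1
  have hb' : b = a + r := by exact_mod_cast hb
  have har : (a:ℝ) * ((r:ℝ) - 1) = 0 := by
    linear_combination (-1/2:ℝ)*h3 - (((r:ℝ)^2+(r:ℝ))/2)*h1 + ((1-3*(r:ℝ))/2)*hb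
  have ha0 : a = 0 := by
    rcases mul_eq_zero.mp har with h | h
    · exact_mod_cast h
    · -- r = 1: connected 1-regular graph has at most 2 vertices
      have hr1 : r = 1 := by
        have : (r:ℝ) = 1 := by linarith
        exact_mod_cast this
      subst hr1
      have hle := aux_one_regular_card_le_two G hconn hreg
      omega
  subst ha0
  have hbr : b = r := by omega
  have hn : n = r + 1 := by omega
  exact ⟨rfl, hbr, by omega, aux_regular_complete G hreg hn⟩
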